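/- Let (u,m) ∈ C³(Q̄_T) × C²(Q̄_T) be a classical solution of the EMFG system and let K > 0 satisfy ‖Du‖_{C⁰(Q̄_T)} ≤ K. Define δ_K = inf{ H⁻¹(x,p,s) : x ∈ 𝕋^d, p ∈ ℝ^d, s ≤ K }, where H⁻¹(x,p,·) denotes the inverse of the strictly decreasing bijection m ↦ H(x,p,m) of (0,∞) onto ℝ, and define h(s) = sup{ m > 0 : sup_{(x,p)} ( H(x,p,m) − C₀ψ(m)|p|^γ ) ≥ −s }. Then δ_K > 0, and for every (x,t) ∈ Q̄_T one has δ_K ≤ m(x,t) ≤ h( K + C₀ K^γ · sup_{[δ_K,∞)} ψ ). In particular ‖m‖_{C⁰(Q̄_T)} + ‖1/m‖_{C⁰(Q̄_T)} is bounded by a constant depending only on C₀, K, δ_K⁻¹, sup_{[δ_K,∞)} ψ, and h. -/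

import Mathlib

open Set Function MeasureTheory Filter
open scoped Topology

noncomputable section

/-- `Ed d` is the ambient Euclidean space `ℝ^d`; the flat torus `𝕋^d` is modeled by
`ℤ^d`-periodic functions on `Ed d`. -/
abbrev Ed (d : ℕ) := EuclideanSpace ℝ (Fin d)

namespace EMFG

variable {d : ℕ}

/-- Euclidean scalar product. -/
def dotE {d : ℕ} (u v : Ed d) : ℝ := inner ℝ u v

/-- Periodicity with respect to the standard integer lattice: a function on `ℝ^d`
descends to the torus `𝕋^d`. -/
def XPeriodic {α : Type*} (f : Ed d → α) : Prop :=
  ∀ (x : Ed d) (i : Fin d), f (x + EuclideanSpace.single i (1:ℝ)) = f x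

/-! Partial derivatives of a scalar Hamiltonian `H = H(x,p,m)`. -/

/-- `H_m` -/
def dm (H : Ed d → Ed d → ℝ → ℝ) (x p : Ed d) (m : ℝ) : ℝ :=
  deriv (fun m' => H x p m') m

/-- `H_{mm}` -/
def dmm (H : Ed d → Ed d → ℝ → ℝ) (x p : Ed d) (m : ℝ) : ℝ :=
  deriv (fun m' => dm H x p m') m

/-- `D_p H` (as a vector). -/
def gradp (H : Ed d → Ed d → ℝ → ℝ) (x p : Ed d) (m : ℝ) : Ed d :=
  gradient (fun p' => H x p' m) p

/-- `D_x H` (as a vector). -/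
def gradx (H : Ed d → Ed d → ℝ → ℝ) (x p : Ed d) (m : ℝ) : Ed d :=
  gradient (fun x' => H x' p m) x

/-- `D²_{pp} H` -/
def hesspp (H : Ed d → Ed d → ℝ → ℝ) (x p : Ed d) (m : ℝ) : Ed d →L[ℝ] Ed d :=
  fderiv ℝ (fun p' => gradp H x p' m) p

/-- `D²_{xx} H` -/
def hessxx (H : Ed d → Ed d → ℝ → ℝ) (x p : Ed d) (m : ℝ) : Ed d →L[ℝ] Ed d :=
  fderiv ℝ (fun x' => gradx H x' p m) x

/-- `D²_{xp} H` -/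
def hessxp (H : Ed d → Ed d → ℝ → ℝ) (x p : Ed d) (m : ℝ) : Ed d →L[ℝ] Ed d :=
  fderiv ℝ (fun x' => gradp H x' p m) x

/-- `D_p H_m` -/
def gradpdm (H : Ed d → Ed d → ℝ → ℝ) (x p : Ed d) (m : ℝ) : Ed d :=
  gradient (fun p' => dm H x p' m) p

/-- `D_x H_m` -/
def gradxdm (H : Ed d → Ed d → ℝ → ℝ) (x p : Ed d) (m : ℝ) : Ed d :=
  gradient (fun x' => dm H x' p m) x

/-! Partial derivatives of a vector field `B = B(x,p,m) ∈ ℝ^d`. -/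

/-- `B_m` -/
def vdm (B : Ed d → Ed d → ℝ → Ed d) (x p : Ed d) (m : ℝ) : Ed d :=
  deriv (fun m' => B x p m') m

/-- `B_{mm}` -/
def vdmm (B : Ed d → Ed d → ℝ → Ed d) (x p : Ed d) (m : ℝ) : Ed d :=
  deriv (fun m' => vdm B x p m') m

/-- `D_p B` -/
def jacp (B : Ed d → Ed d → ℝ → Ed d) (x p : Ed d) (m : ℝ) : Ed d →L[ℝ] Ed d :=
  fderiv ℝ (fun p' => B x p' m) p

/-- `D_x B` -/
def jacx (B : Ed d → Ed d → ℝ → Ed d) (x p : Ed d) (m : ℝ) : Ed d →L[ℝ] Ed d :=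
  fderiv ℝ (fun x' => B x' p m) x

/-- `D_p B_m` -/
def jacpdm (B : Ed d → Ed d → ℝ → Ed d) (x p : Ed d) (m : ℝ) : Ed d →L[ℝ] Ed d :=
  fderiv ℝ (fun p' => vdm B x p' m) p

/-- `D_x B_m` -/
def jacxdm (B : Ed d → Ed d → ℝ → Ed d) (x p : Ed d) (m : ℝ) : Ed d →L[ℝ] Ed d :=
  fderiv ℝ (fun x' => vdm B x' p m) x

/-- `D²_{pp} B` -/
def hessppB (B : Ed d → Ed d → ℝ → Ed d) (x p : Ed d) (m : ℝ) :
    Ed d →L[ℝ] Ed d →L[ℝ] Ed d :=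
  fderiv ℝ (fun p' => jacp B x p' m) p

/-- `D²_{xx} B` -/
def hessxxB (B : Ed d → Ed d → ℝ → Ed d) (x p : Ed d) (m : ℝ) :
    Ed d →L[ℝ] Ed d →L[ℝ] Ed d :=
  fderiv ℝ (fun x' => jacx B x' p m) x

/-- `D²_{xp} B` -/
def hessxpB (B : Ed d → Ed d → ℝ → Ed d) (x p : Ed d) (m : ℝ) :
    Ed d →L[ℝ] Ed d →L[ℝ] Ed d :=
  fderiv ℝ (fun x' => jacp B x' p m) x

/-- `div_x B` (at frozen `p`, `m`). -/
def divx (B : Ed d → Ed d → ℝ → Ed d) (x p : Ed d) (m : ℝ) : ℝ :=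
  ∑ i, (jacx B x p m (EuclideanSpace.single i (1:ℝ))) i

/-- The time derivative `u_t`, taken within the time interval `[0,T]`. -/
def tderiv (T : ℝ) (u : Ed d → ℝ → ℝ) (x : Ed d) (t : ℝ) : ℝ :=
  derivWithin (u x) (Icc 0 T) t

/-- The spatial gradient `D_x u`. -/
def sgrad (u : Ed d → ℝ → ℝ) (x : Ed d) (t : ℝ) : Ed d :=
  gradient (fun x' => u x' t) x

/-- The closed cylinder `Q̄_T = 𝕋^d × [0,T]` (lifted to `ℝ^d × [0,T]`). -/
def QTbar (d : ℕ) (T : ℝ) : Set (Ed d × ℝ) := univ ×ˢ Icc 0 T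

/-- `u ∈ C^n(Q̄_T)`. -/
def RegOn (n : ℕ) (T : ℝ) (u : Ed d → ℝ → ℝ) : Prop :=
  ContDiffOn ℝ n (fun z : Ed d × ℝ => u z.1 z.2) (QTbar d T)

/-- `u ∈ C^{k,s}(Q̄_T)`: `k` times continuously differentiable with `s`-Hölder
continuous `k`-th order derivatives. -/
def HolderRegOn (k : ℕ) (s T : ℝ) (u : Ed d → ℝ → ℝ) : Prop :=
  RegOn k T u ∧ ∃ C : NNReal,
    HolderOnWith C s.toNNReal
      (iteratedFDerivWithin ℝ k (fun z : Ed d × ℝ => u z.1 z.2) (QTbar d T)) (QTbar d T)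

/-- The full data and standing assumptions (M), (H), (B), (G), (E) of the paper,
together with the normalizations of Remark 2.1. -/
structure Setup (d : ℕ) where
  /-- the time horizon -/
  T : ℝ
  T_pos : 0 < T
  /-- the structural constant `C₀` -/
  C₀ : ℝ
  C₀_pos : 0 < C₀
  /-- growth exponents -/
  γ : ℝ
  γ₁ : ℝ
  γ₂ : ℝ
  hγ : 1 < γ
  hγ₁ : 0 ≤ γ₁
  hγ₂₁ : γ₂ ≤ γ₁
  hγ₁γ : γ₁ ≤ γ
  hγ₂ : γ₂ < 2 * γ₁ - γ + 2
  /-- the structural functions `C̄` and `ψ` on `(0,∞)` -/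
  Cb : ℝ → ℝ
  ψ : ℝ → ℝ
  Cb_pos : ∀ m : ℝ, 0 < m → 0 < Cb m
  ψ_pos : ∀ m : ℝ, 0 < m → 0 < ψ m
  Cb_cont : ContinuousOn Cb (Ioi 0)
  ψ_cont : ContinuousOn ψ (Ioi 0)
  ψ_mono : ∀ m₁ m₂ : ℝ, 0 < m₁ → m₁ ≤ m₂ → ψ m₂ ≤ ψ m₁
  ψ_lim : γ₁ < γ → ∃ ℓ : ℝ, 0 < ℓ ∧ Tendsto ψ atTop (𝓝 ℓ)
  /-- the initial density -/
  m₀ : Ed d → ℝ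
  m₀_per : XPeriodic m₀
  m₀_smooth : ContDiff ℝ 4 m₀
  m₀_pos : ∀ x, 0 < m₀ x
  m₀_int : ∫ x in {x : Ed d | ∀ i, x i ∈ Icc (0:ℝ) 1}, m₀ x = 1
  /-- the Hamiltonian -/
  H : Ed d → Ed d → ℝ → ℝ
  H_per : ∀ (p : Ed d) (m : ℝ), XPeriodic (fun x => H x p m)
  H_smooth : ContDiffOn ℝ 4 (fun z : Ed d × Ed d × ℝ => H z.1 z.2.1 z.2.2)
      (univ ×ˢ univ ×ˢ Ioi 0)
  Hm_neg : ∀ (x p : Ed d) (m : ℝ), 0 < m → dm H x p m < 0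
  H1 : ∀ (x p : Ed d) (m : ℝ), 0 < m → ∀ ξ : Ed d,
      C₀⁻¹ * ψ m * (1 + ‖p‖) ^ (γ - 2) * ‖ξ‖ ^ 2 ≤ dotE (hesspp H x p m ξ) ξ ∧
      dotE (hesspp H x p m ξ) ξ ≤ C₀ * ψ m * (1 + ‖p‖) ^ (γ - 2) * ‖ξ‖ ^ 2
  H2a : ∀ (x p : Ed d) (m : ℝ), 0 < m →
      ‖gradp H x p m‖ ≤ C₀ * ψ m * (1 + ‖p‖) ^ (γ - 1)
  H2b : ∀ (x p : Ed d) (m : ℝ), 0 < m →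
      (1 + C₀⁻¹) * H x p m - Cb m ≤ dotE (gradp H x p m) p
  HM1 : ∀ (x p : Ed d) (m : ℝ), 0 < m →
      C₀⁻¹ * ψ m * ‖p‖ ^ γ₁ ≤ -(m * dm H x p m) ∧
      -(m * dm H x p m) ≤ C₀ * ψ m * ‖p‖ ^ γ₁ + Cb m
  HM2 : ∀ (x p : Ed d) (m : ℝ), 0 < m →
      |m * dmm H x p m| ≤ -(C₀ * dm H x p m) ∧
      ‖p‖ * ‖gradpdm H x p m‖ ≤ -(C₀ * dm H x p m)
  HX1 : ∀ (x p : Ed d) (m : ℝ), 0 < m →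
      ‖gradx H x p m‖ ≤ C₀ * ψ m * (1 + ‖p‖) ^ γ₂ ∧
      ‖hessxx H x p m‖ ≤ C₀ * ψ m * (1 + ‖p‖) ^ γ₂ ∧
      ‖hessxp H x p m‖ ≤ C₀ * ψ m * (1 + ‖p‖) ^ (γ₂ - 1)
  HX2 : ∀ (x p : Ed d) (m : ℝ), 0 < m →
      m * ‖gradxdm H x p m‖ ≤ C₀ * ψ m * (1 + ‖p‖) ^ γ₂
  HX3 : ∀ (x : Ed d) (m : ℝ), 0 < m → ‖gradx H x 0 m‖ ≤ C₀
  /-- the drift vector field -/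
  B : Ed d → Ed d → ℝ → Ed d
  B_per : ∀ (p : Ed d) (m : ℝ), XPeriodic (fun x => B x p m)
  B_smooth : ContDiffOn ℝ 4 (fun z : Ed d × Ed d × ℝ => B z.1 z.2.1 z.2.2)
      (univ ×ˢ univ ×ˢ Ici 0)
  B_zero : ∀ x p : Ed d, B x p 0 = 0
  B1 : ∀ (x p : Ed d) (m : ℝ), 0 < m → ∀ ξ : Ed d,
      C₀⁻¹ * m * ψ m * ‖p‖ ^ (γ - 2) * ‖ξ‖ ^ 2 ≤ dotE (jacp B x p m ξ) ξ ∧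
      dotE (jacp B x p m ξ) ξ ≤ C₀ * m * ψ m * (1 + ‖p‖) ^ (γ - 2) * ‖ξ‖ ^ 2
  B2 : ∀ (x p : Ed d) (m : ℝ), 0 < m →
      ‖vdm B x p m‖ ≤ C₀ * ψ m * (1 + ‖p‖) ^ (γ - 1) ∧
      ‖jacpdm B x p m‖ ≤ C₀ * ψ m * (1 + ‖p‖) ^ (γ - 2) ∧
      ‖hessppB B x p m‖ ≤ C₀ * m * ψ m * (1 + ‖p‖) ^ (γ - 3)
  BM : ∀ (x p : Ed d) (m : ℝ), 0 < m →
      ‖vdmm B x p m‖ ≤ -(C₀ * (1 + ‖p‖) * dm H x p m)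
  BX1 : ∀ (x p : Ed d) (m : ℝ), 0 < m →
      ‖jacx B x p m‖ ≤ C₀ * m * ψ m * (1 + ‖p‖) ^ (γ₂ - 1) ∧
      ‖hessxxB B x p m‖ ≤ C₀ * m * ψ m * (1 + ‖p‖) ^ (γ₂ - 1) ∧
      ‖jacxdm B x p m‖ ≤ C₀ * ψ m * (1 + ‖p‖) ^ (γ₂ - 1)
  BX2 : ∀ (x p : Ed d) (m : ℝ), 0 < m →
      ‖hessxpB B x p m‖ ≤ C₀ * m * ψ m * (1 + ‖p‖) ^ (γ₂ - 2)
  BX3 : ∀ (x : Ed d) (m : ℝ), 0 < m → ‖jacx B x 0 m‖ ≤ C₀ * m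
  /-- the terminal coupling -/
  g : Ed d → ℝ → ℝ
  g_per : ∀ m : ℝ, XPeriodic (fun x => g x m)
  g_smooth : ContDiffOn ℝ 4 (fun z : Ed d × ℝ => g z.1 z.2) (univ ×ˢ Ioi 0)
  gm_pos : ∀ (x : Ed d) (m : ℝ), 0 < m → 0 < deriv (g x) m
  /-- `sup g` and `inf g`: the common limits of `g(x,·)` at `∞` and `0⁺` (assumption (G)) -/
  gSup : ℝ
  gInf : ℝ
  g_lim_top : ∀ x : Ed d, Tendsto (g x) atTop (𝓝 gSup)
  g_lim_bot : ∀ x : Ed d, Tendsto (g x) (𝓝[>] 0) (𝓝 gInf)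
  /-- (E1) -/
  E1 : ∀ M : ℝ, ∃ δ : ℝ, 0 < δ ∧ ∀ (x p : Ed d) (m : ℝ), 0 < m → m < δ → M ≤ H x p m
  /-- (E2) -/
  E2 : ∀ M : ℝ, ∃ R : ℝ, ∀ (x p : Ed d) (m : ℝ), 0 < m → R ≤ m →
      H x p m - C₀ * ψ m * ‖p‖ ^ γ ≤ -M
  /-- (E3), strict form of the uniqueness condition -/
  E3 : ∀ (x p : Ed d) (m : ℝ), 0 < m → ∀ ξ : Ed d, ξ ≠ 0 →
      (1 + C₀⁻¹) * (dotE (vdm B x p m - gradp H x p m) ξ) ^ 2 <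
        -(4 * dm H x p m) * dotE (jacp B x p m ξ) ξ
  /-- normalization (2.4) -/
  Hgrowth : ∀ (x p : Ed d) (m : ℝ), 0 < m →
      C₀⁻¹ * ψ m * ‖p‖ ^ γ - Cb m ≤ H x p m ∧ H x p m ≤ C₀ * ψ m * ‖p‖ ^ γ + Cb m
  /-- normalization (2.5) -/
  Hnorm : ∀ (x : Ed d) (m : ℝ), m ∈ Icc (⨅ y, m₀ y) (⨆ y, m₀ y) → |H x 0 m| ≤ C₀
  Bnorm : ∀ (x : Ed d) (m : ℝ), m ∈ Icc (⨅ y, m₀ y) (⨆ y, m₀ y) → ‖B x 0 m‖ ≤ C₀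

/-- `(u,m)` is a classical solution of the (EMFG) system (regularity stated separately). -/
structure IsSol (S : Setup d) (u m : Ed d → ℝ → ℝ) : Prop where
  u_per : ∀ t : ℝ, XPeriodic (fun x => u x t)
  m_per : ∀ t : ℝ, XPeriodic (fun x => m x t)
  m_pos : ∀ (x : Ed d) (t : ℝ), t ∈ Icc 0 S.T → 0 < m x t
  hjb : ∀ (x : Ed d) (t : ℝ), t ∈ Ioo 0 S.T →
      -(tderiv S.T u x t) + S.H x (sgrad u x t) (m x t) = 0
  kfp : ∀ (x : Ed d) (t : ℝ), t ∈ Ioo 0 S.T →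
      tderiv S.T m x t -
        ∑ i, ((fderiv ℝ (fun x' => S.B x' (sgrad u x' t) (m x' t)) x)
          (EuclideanSpace.single i (1:ℝ))) i = 0
  init : ∀ x : Ed d, m x 0 = S.m₀ x
  term : ∀ x : Ed d, u x S.T = S.g x (m x S.T)

end EMFG

namespace EMFG

/-- The function `h` of (3.3): `h(σ) = sup{m > 0 : sup_{(x,p)}(H(x,p,m) − C₀ψ(m)|p|^γ) ≥ −σ}`. -/
def hFun {d : ℕ} (S : Setup d) (σ : ℝ) : ℝ :=
  sSup {m : ℝ | 0 < m ∧
    -σ ≤ ⨆ z : Ed d × Ed d, (S.H z.1 z.2 m - S.C₀ * S.ψ m * ‖z.2‖ ^ S.γ)}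

/-- `H⁻¹(x,p,·)`: the inverse of `m ↦ H(x,p,m)` on `(0,∞)`. -/
def Hinv {d : ℕ} (S : Setup d) (x p : Ed d) (s : ℝ) : ℝ :=
  Function.invFunOn (fun m => S.H x p m) (Ioi 0) s

/-- `δ_K = inf{H⁻¹(x,p,s) : x ∈ 𝕋^d, p ∈ ℝ^d, s ≤ K}`. -/
def deltaK {d : ℕ} (S : Setup d) (K : ℝ) : ℝ :=
  sInf {r : ℝ | ∃ (x p : Ed d) (s : ℝ), s ≤ K ∧ r = Hinv S x p s}

end EMFG

namespace EMFG


section Aux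
variable {d : ℕ} (S : Setup d)

lemma H_cont_m (x p : Ed d) : ContinuousOn (fun m' => S.H x p m') (Ioi 0) := by
  have h1 : ContinuousOn (fun z : Ed d × Ed d × ℝ => S.H z.1 z.2.1 z.2.2)
      (univ ×ˢ univ ×ˢ Ioi 0) := S.H_smooth.continuousOn
  have h2 : Continuous (fun m' : ℝ => ((x, p, m') : Ed d × Ed d × ℝ)) := by
    exact continuous_const.prodMk (continuous_const.prodMk continuous_id)
  exact h1.comp h2.continuousOn (fun m' hm' => by
    simp only [Set.mem_prod, Set.mem_univ, true_and]; exact hm')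

lemma H_strictAntiOn (x p : Ed d) : StrictAntiOn (fun m' => S.H x p m') (Ioi 0) := by
  refine strictAntiOn_of_deriv_neg (convex_Ioi 0) (H_cont_m S x p) ?_
  intro m hm
  rw [interior_Ioi] at hm
  exact S.Hm_neg x p m hm

lemma H_surj (x p : Ed d) (s : ℝ) : ∃ m' ∈ Ioi (0:ℝ), S.H x p m' = s := by
  obtain ⟨δ, hδpos, hE1⟩ := S.E1 (s + 1)
  obtain ⟨R, hE2⟩ := S.E2 (S.C₀ * S.ψ 1 * ‖p‖ ^ S.γ - s + 1)
  set a : ℝ := min (δ / 2) 1 with ha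
  have hapos : 0 < a := lt_min (by linarith) one_pos
  have haδ : a < δ := lt_of_le_of_lt (min_le_left _ _) (by linarith)
  set b : ℝ := max (max R 1) a with hb
  have hab : a ≤ b := le_max_right _ _
  have hb1 : (1:ℝ) ≤ b := le_trans (le_max_right R 1) (le_max_left _ _)
  have hbR : R ≤ b := le_trans (le_max_left R 1) (le_max_left _ _)
  have hbpos : 0 < b := lt_of_lt_of_le one_pos hb1
  have hfa : s + 1 ≤ S.H x p a := hE1 x p a hapos haδ
  have hfb : S.H x p b ≤ s - 1 := by
    have h2 := hE2 x p b hbpos hbR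
    have hψb : S.ψ b ≤ S.ψ 1 := S.ψ_mono 1 b one_pos hb1
    have h0 : (0:ℝ) ≤ ‖p‖ ^ S.γ := Real.rpow_nonneg (norm_nonneg p) _
    have h3 : S.C₀ * S.ψ b * ‖p‖ ^ S.γ ≤ S.C₀ * S.ψ 1 * ‖p‖ ^ S.γ :=
      mul_le_mul_of_nonneg_right (mul_le_mul_of_nonneg_left hψb S.C₀_pos.le) h0
    linarith
  have hsub : Icc a b ⊆ Ioi (0:ℝ) := fun y hy => lt_of_lt_of_le hapos hy.1
  have hivt := intermediate_value_Icc' hab ((H_cont_m S x p).mono hsub)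
  have hmem : s ∈ Icc (S.H x p b) (S.H x p a) := ⟨by linarith, by linarith⟩
  obtain ⟨m', hm', hfm'⟩ := hivt hmem
  exact ⟨m', lt_of_lt_of_le hapos hm'.1, hfm'⟩

lemma Hinv_mem (x p : Ed d) (s : ℝ) : Hinv S x p s ∈ Ioi (0:ℝ) :=
  Function.invFunOn_mem (H_surj S x p s)

lemma Hinv_eq (x p : Ed d) (s : ℝ) : S.H x p (Hinv S x p s) = s :=
  Function.invFunOn_eq (H_surj S x p s)

end Aux

/-- Corollary 3.4: global positive two-sided bounds for the density.
If `‖Du‖_{C⁰(Q̄_T)} ≤ K` then `δ_K > 0` and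
`δ_K ≤ m ≤ h(K + C₀K^γ · sup_{[δ_K,∞)} ψ)` on `Q̄_T`. -/
theorem density_global_bounds (d : ℕ) (S : Setup d) (u m : Ed d → ℝ → ℝ)
    (hsol : IsSol S u m) (hu : RegOn 3 S.T u) (hm : RegOn 2 S.T m)
    (K : ℝ) (hK : 0 < K)
    (hDu : ∀ (x : Ed d) (t : ℝ), t ∈ Icc 0 S.T →
      ‖sgrad u x t‖ ≤ K ∧ |tderiv S.T u x t| ≤ K) :
    0 < deltaK S K ∧
    ∀ (x : Ed d) (t : ℝ), t ∈ Icc 0 S.T →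
      deltaK S K ≤ m x t ∧
      m x t ≤ hFun S (K + S.C₀ * K ^ S.γ * sSup (S.ψ '' Ici (deltaK S K))) := by
  classical
  obtain ⟨δ, hδpos, hE1⟩ := S.E1 (K + 1)
  have hAlb : ∀ r ∈ {r : ℝ | ∃ (x p : Ed d) (s : ℝ), s ≤ K ∧ r = Hinv S x p s}, δ ≤ r := by
    rintro r ⟨x, p, s, hs, rfl⟩
    by_contra hlt
    push_neg at hlt
    have h1 := hE1 x p _ (Hinv_mem S x p s) hlt
    rw [Hinv_eq S x p s] at h1
    linarith
  have hAne : Set.Nonempty {r : ℝ | ∃ (x p : Ed d) (s : ℝ), s ≤ K ∧ r = Hinv S x p s} :=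
    ⟨Hinv S 0 0 K, 0, 0, K, le_rfl, rfl⟩
  have hδK : δ ≤ deltaK S K := le_csInf hAne hAlb
  have hδKpos : 0 < deltaK S K := lt_of_lt_of_le hδpos hδK
  refine ⟨hδKpos, ?_⟩
  -- continuity of m in time
  have mc : ∀ x : Ed d, ContinuousOn (fun t => m x t) (Icc 0 S.T) := by
    intro x
    have h1 := hm.continuousOn
    have h2 : Continuous (fun t : ℝ => ((x, t) : Ed d × ℝ)) :=
      continuous_const.prodMk continuous_id
    exact h1.comp h2.continuousOn (fun t ht => by
      simp only [QTbar, Set.mem_prod, Set.mem_univ, true_and]; exact ht)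
  -- interior lower bound
  have hlow : ∀ (x : Ed d) (t : ℝ), t ∈ Ioo 0 S.T → deltaK S K ≤ m x t := by
    intro x t ht
    have hmt : 0 < m x t := hsol.m_pos x t (Ioo_subset_Icc_self ht)
    have hDu' := hDu x t (Ioo_subset_Icc_self ht)
    have hH : S.H x (sgrad u x t) (m x t) = tderiv S.T u x t := by
      have := hsol.hjb x t ht; linarith
    have hle : S.H x (sgrad u x t) (m x t) ≤ K := by
      rw [hH]; exact le_trans (le_abs_self _) hDu'.2
    have h1 : Hinv S x (sgrad u x t) K ≤ m x t := by
      by_contra hlt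
      push_neg at hlt
      have h2 : S.H x (sgrad u x t) (Hinv S x (sgrad u x t) K) <
          S.H x (sgrad u x t) (m x t) :=
        H_strictAntiOn S x (sgrad u x t) (mem_Ioi.mpr hmt)
          (Hinv_mem S x (sgrad u x t) K) hlt
      rw [Hinv_eq S x (sgrad u x t) K] at h2
      linarith
    exact le_trans (csInf_le ⟨δ, hAlb⟩ ⟨x, sgrad u x t, K, le_rfl, rfl⟩) h1
  -- setup for upper bound
  have hΨbdd : BddAbove (S.ψ '' Ici (deltaK S K)) := by
    refine ⟨S.ψ (deltaK S K), ?_⟩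
    rintro y ⟨m', hm', rfl⟩
    exact S.ψ_mono _ m' hδKpos hm'
  have hΨge : S.ψ (deltaK S K) ≤ sSup (S.ψ '' Ici (deltaK S K)) :=
    le_csSup hΨbdd ⟨deltaK S K, self_mem_Ici, rfl⟩
  have hΨpos : 0 < sSup (S.ψ '' Ici (deltaK S K)) :=
    lt_of_lt_of_le (S.ψ_pos _ hδKpos) hΨge
  have hKγ : (0:ℝ) < K ^ S.γ := Real.rpow_pos_of_pos hK _
  set Ψ := sSup (S.ψ '' Ici (deltaK S K)) with hΨdef
  set σ := K + S.C₀ * K ^ S.γ * Ψ with hσdef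
  have hσpos : 0 < σ := by
    have h1 : 0 < S.C₀ * K ^ S.γ * Ψ := mul_pos (mul_pos S.C₀_pos hKγ) hΨpos
    rw [hσdef]; linarith
  obtain ⟨R, hE2⟩ := S.E2 (σ + 1)
  have hbddA : BddAbove {m' : ℝ | 0 < m' ∧
      -σ ≤ ⨆ z : Ed d × Ed d, (S.H z.1 z.2 m' - S.C₀ * S.ψ m' * ‖z.2‖ ^ S.γ)} := by
    refine ⟨max R 0, ?_⟩
    rintro m' ⟨hm'pos, hm'sup⟩
    by_contra hlt
    push_neg at hlt
    have hR : R ≤ m' := le_of_lt (lt_of_le_of_lt (le_max_left _ _) hlt)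
    have h1 : (⨆ z : Ed d × Ed d, (S.H z.1 z.2 m' - S.C₀ * S.ψ m' * ‖z.2‖ ^ S.γ)) ≤ -(σ + 1) :=
      ciSup_le (fun z => hE2 z.1 z.2 m' hm'pos hR)
    linarith
  -- interior upper bound
  have hup : ∀ (x : Ed d) (t : ℝ), t ∈ Ioo 0 S.T → m x t ≤ hFun S σ := by
    intro x t ht
    have hmt : 0 < m x t := hsol.m_pos x t (Ioo_subset_Icc_self ht)
    have hDu' := hDu x t (Ioo_subset_Icc_self ht)
    have hH : S.H x (sgrad u x t) (m x t) = tderiv S.T u x t := by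
      have := hsol.hjb x t ht; linarith
    have hδm : deltaK S K ≤ m x t := hlow x t ht
    have hψm : S.ψ (m x t) ≤ Ψ := le_csSup hΨbdd ⟨m x t, hδm, rfl⟩
    have hψpos : 0 < S.ψ (m x t) := S.ψ_pos _ hmt
    have hHge : -K ≤ S.H x (sgrad u x t) (m x t) := by
      rw [hH]; linarith [(abs_le.mp hDu'.2).1]
    have hpγ : ‖sgrad u x t‖ ^ S.γ ≤ K ^ S.γ :=
      Real.rpow_le_rpow (norm_nonneg _) hDu'.1 (by linarith [S.hγ])
    have h0 : (0:ℝ) ≤ ‖sgrad u x t‖ ^ S.γ := Real.rpow_nonneg (norm_nonneg _) _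
    have hprod : S.C₀ * S.ψ (m x t) * ‖sgrad u x t‖ ^ S.γ ≤ S.C₀ * Ψ * K ^ S.γ := by
      have h1 : S.C₀ * S.ψ (m x t) ≤ S.C₀ * Ψ := mul_le_mul_of_nonneg_left hψm S.C₀_pos.le
      exact mul_le_mul h1 hpγ h0 (mul_nonneg S.C₀_pos.le hΨpos.le)
    have hval : -σ ≤ S.H x (sgrad u x t) (m x t)
        - S.C₀ * S.ψ (m x t) * ‖sgrad u x t‖ ^ S.γ := by
      have hσ' : σ = K + S.C₀ * Ψ * K ^ S.γ := by rw [hσdef]; ring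
      linarith
    have hsup : -σ ≤ ⨆ z : Ed d × Ed d,
        (S.H z.1 z.2 (m x t) - S.C₀ * S.ψ (m x t) * ‖z.2‖ ^ S.γ) := by
      by_cases hbb : BddAbove (Set.range fun z : Ed d × Ed d =>
        S.H z.1 z.2 (m x t) - S.C₀ * S.ψ (m x t) * ‖z.2‖ ^ S.γ)
      · exact le_trans hval (le_ciSup hbb (x, sgrad u x t))
      · rw [Real.iSup_of_not_bddAbove hbb]; linarith
    exact le_csSup hbddA ⟨hmt, hsup⟩
  -- extend to the closed cylinder by continuity
  intro x t ht
  have hc : ContinuousWithinAt (fun t' => m x t') (Icc 0 S.T) t := (mc x) t ht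
  have hcl : t ∈ closure (Ioo 0 S.T) := by
    rw [closure_Ioo (ne_of_lt S.T_pos)]; exact ht
  have hne : (𝓝[Ioo 0 S.T] t).NeBot := mem_closure_iff_nhdsWithin_neBot.mp hcl
  have htend : Tendsto (fun t' => m x t') (𝓝[Ioo 0 S.T] t) (𝓝 (m x t)) :=
    hc.mono Ioo_subset_Icc_self
  constructor
  · exact ge_of_tendsto htend
      (Filter.eventually_of_mem self_mem_nhdsWithin (fun y hy => hlow x y hy))
  · exact le_of_tendsto htend
      (Filter.eventually_of_mem self_mem_nhdsWithin (fun y hy => hup x y hy))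


end EMFG
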